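/- Let A be a real m×k matrix such that AᵀA is invertible, let B = (AᵀA)⁻¹, let a ∈ ℝᵐ, and set ê = (AᵀA)⁻¹Aᵀa and r = ‖a − A(AᵀA)⁻¹Aᵀa‖². If r > 0 and Ã = [A a] is the m×(k+1) matrix obtained by appending a as a last column, then ÃᵀÃ is invertible and (ÃᵀÃ)⁻¹ equals the (k+1)×(k+1) matrix whose top-left k×k block is B (with zeros in the last row and column) plus (1/r)·(ê, −1)(ê, −1)ᵀ, where (ê, −1) ∈ ℝ^{k+1} is ê with −1 appended as last entry. -/

import Mathlib

open Matrix

noncomputable section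

/-- The matrix `A` with the vector `a` appended as a last column. -/
def appendCol {m k : ℕ} (A : Matrix (Fin m) (Fin k) ℝ) (a : Fin m → ℝ) :
    Matrix (Fin m) (Fin (k + 1)) ℝ :=
  Matrix.of fun i => Fin.snoc (A i) (a i)

/-- The `k × k` matrix `B` padded to a `(k+1) × (k+1)` matrix with zeros in the
last row and column. -/
def padZero {k : ℕ} (B : Matrix (Fin k) (Fin k) ℝ) :
    Matrix (Fin (k + 1)) (Fin (k + 1)) ℝ :=
  Matrix.of fun i j =>
    if hi : (i : ℕ) < k then if hj : (j : ℕ) < k then B ⟨i, hi⟩ ⟨j, hj⟩ else 0 else 0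

/-- Matrix inversion lemma for column addition. -/
theorem stmt0 {m k : ℕ} (A : Matrix (Fin m) (Fin k) ℝ) (a : Fin m → ℝ)
    (hA : IsUnit (Aᵀ * A))
    (B : Matrix (Fin k) (Fin k) ℝ) (hB : B = (Aᵀ * A)⁻¹)
    (e : Fin k → ℝ) (he : e = (Aᵀ * A)⁻¹ *ᵥ (Aᵀ *ᵥ a))
    (r : ℝ)
    (hr : r = (a - A *ᵥ ((Aᵀ * A)⁻¹ *ᵥ (Aᵀ *ᵥ a))) ⬝ᵥ
              (a - A *ᵥ ((Aᵀ * A)⁻¹ *ᵥ (Aᵀ *ᵥ a))))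
    (hrpos : 0 < r)
    (Atil : Matrix (Fin m) (Fin (k + 1)) ℝ) (hAtil : Atil = appendCol A a) :
    IsUnit (Atilᵀ * Atil) ∧
      (Atilᵀ * Atil)⁻¹ =
        padZero B + (1 / r) • vecMulVec (Fin.snoc e (-1)) (Fin.snoc e (-1)) := by
  have hrne : r ≠ 0 := ne_of_gt hrpos
  have hdet : IsUnit (Aᵀ * A).det := (Matrix.isUnit_iff_isUnit_det _).mp hA
  have hBA : B * (Aᵀ * A) = 1 := by rw [hB]; exact Matrix.nonsing_inv_mul _ hdet
  have hsym : ∀ p q, (Aᵀ * A) p q = (Aᵀ * A) q p := by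
    intro p q
    conv_lhs => rw [show (Aᵀ * A) = (Aᵀ * A)ᵀ by
      rw [Matrix.transpose_mul, Matrix.transpose_transpose]]
    rfl
  have hAe : (Aᵀ * A) *ᵥ e = Aᵀ *ᵥ a := by
    rw [he, Matrix.mulVec_mulVec, Matrix.mul_nonsing_inv _ hdet, Matrix.one_mulVec]
  have hBe : B *ᵥ (Aᵀ *ᵥ a) = e := by rw [hB, ← he]
  -- r identity
  rw [← he] at hr
  have hmv : ∀ v : Fin m → ℝ, v ⬝ᵥ (A *ᵥ e) = (Aᵀ *ᵥ v) ⬝ᵥ e := by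
    intro v
    rw [Matrix.dotProduct_mulVec, Matrix.mulVec_transpose]
  have hr' : e ⬝ᵥ (Aᵀ *ᵥ a) = a ⬝ᵥ a - r := by
    have h2 : (A *ᵥ e) ⬝ᵥ (A *ᵥ e) = e ⬝ᵥ (Aᵀ *ᵥ a) := by
      rw [hmv, Matrix.mulVec_mulVec, hAe, dotProduct_comm]
    have h3 : a ⬝ᵥ (A *ᵥ e) = e ⬝ᵥ (Aᵀ *ᵥ a) := by
      rw [hmv, dotProduct_comm]
    rw [sub_dotProduct, dotProduct_sub, dotProduct_sub,
      dotProduct_comm (A *ᵥ e) a, h2, h3] at hr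
    linarith
  set N := padZero B + (1 / r) • vecMulVec (Fin.snoc e (-1)) (Fin.snoc e (-1)) with hN
  -- entries of M := Atilᵀ * Atil
  have Mcc : ∀ p q : Fin k, (Atilᵀ * Atil) p.castSucc q.castSucc = (Aᵀ * A) p q := by
    intro p q
    simp [hAtil, appendCol, Matrix.mul_apply]
  have Mcl : ∀ p : Fin k, (Atilᵀ * Atil) p.castSucc (Fin.last k) = (Aᵀ *ᵥ a) p := by
    intro p
    simp [hAtil, appendCol, Matrix.mul_apply, Matrix.mulVec, dotProduct]
  have Mlc : ∀ q : Fin k, (Atilᵀ * Atil) (Fin.last k) q.castSucc = (Aᵀ *ᵥ a) q := by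
    intro q
    simp [hAtil, appendCol, Matrix.mul_apply, Matrix.mulVec, dotProduct, mul_comm]
  have Mll : (Atilᵀ * Atil) (Fin.last k) (Fin.last k) = a ⬝ᵥ a := by
    simp [hAtil, appendCol, Matrix.mul_apply, dotProduct]
  -- entries of N
  have Ncc : ∀ p q : Fin k, N p.castSucc q.castSucc = B p q + 1 / r * (e p * e q) := by
    intro p q
    simp [hN, padZero, Matrix.vecMulVec_apply]
  have Ncl : ∀ p : Fin k, N p.castSucc (Fin.last k) = 1 / r * (e p * (-1)) := by
    intro p
    simp [hN, padZero, Matrix.vecMulVec_apply]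
  have Nlc : ∀ q : Fin k, N (Fin.last k) q.castSucc = 1 / r * ((-1) * e q) := by
    intro q
    simp [hN, padZero, Matrix.vecMulVec_apply]
  have Nll : N (Fin.last k) (Fin.last k) = 1 / r := by
    simp [hN, padZero, Matrix.vecMulVec_apply]
  -- key sums
  have Se : ∀ q : Fin k, (∑ x, e x * (Aᵀ * A) x q) = (Aᵀ *ᵥ a) q := by
    intro q
    rw [← hAe]
    simp only [Matrix.mulVec, dotProduct]
    exact Finset.sum_congr rfl fun x _ => by rw [hsym x q, mul_comm]
  have SB : ∀ p q : Fin k, (∑ x, B p x * (Aᵀ * A) x q) = (1 : Matrix (Fin k) (Fin k) ℝ) p q := by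
    intro p q
    rw [← Matrix.mul_apply, hBA]
  have SBe : ∀ p : Fin k, (∑ x, B p x * (Aᵀ *ᵥ a) x) = e p := by
    intro p
    have h := congrFun hBe p
    simpa [Matrix.mulVec, dotProduct] using h
  have See : (∑ x, e x * (Aᵀ *ᵥ a) x) = a ⬝ᵥ a - r := by
    rw [← dotProduct, hr']
  have hNM : N * (Atilᵀ * Atil) = 1 := by
    ext i j
    rw [Matrix.mul_apply, Fin.sum_univ_castSucc]
    induction i using Fin.lastCases with
    | last =>
      induction j using Fin.lastCases with
      | last =>
        simp only [Nlc, Nll, Mcl, Mll]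
        have : (∑ x, 1 / r * (-1 * e x) * (Aᵀ *ᵥ a) x)
            = 1 / r * (-1) * (a ⬝ᵥ a - r) := by
          rw [← See, Finset.mul_sum]
          exact Finset.sum_congr rfl fun x _ => by ring
        rw [this, Matrix.one_apply_eq]
        field_simp
        ring
      | cast q =>
        simp only [Nlc, Nll, Mcc, Mlc]
        have : (∑ x, 1 / r * (-1 * e x) * (Aᵀ * A) x q)
            = 1 / r * (-1) * ((Aᵀ *ᵥ a) q) := by
          rw [← Se q, Finset.mul_sum]
          exact Finset.sum_congr rfl fun x _ => by ring
        rw [this, Matrix.one_apply_ne (Fin.castSucc_lt_last q).ne']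
        ring
    | cast p =>
      induction j using Fin.lastCases with
      | last =>
        simp only [Ncc, Ncl, Mcl, Mll]
        have : (∑ x, (B p x + 1 / r * (e p * e x)) * (Aᵀ *ᵥ a) x)
            = e p + 1 / r * e p * (a ⬝ᵥ a - r) := by
          rw [← SBe p, ← See, Finset.mul_sum, ← Finset.sum_add_distrib]
          exact Finset.sum_congr rfl fun x _ => by ring
        rw [this, Matrix.one_apply_ne (Fin.castSucc_lt_last p).ne]
        field_simp
        ring
      | cast q =>
        simp only [Ncc, Ncl, Mcc, Mlc]
        have : (∑ x, (B p x + 1 / r * (e p * e x)) * (Aᵀ * A) x q)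
            = (1 : Matrix (Fin k) (Fin k) ℝ) p q + 1 / r * e p * ((Aᵀ *ᵥ a) q) := by
          rw [← SB p q, ← Se q, Finset.mul_sum, ← Finset.sum_add_distrib]
          exact Finset.sum_congr rfl fun x _ => by ring
        rw [this]
        have h1 : (1 : Matrix (Fin (k+1)) (Fin (k+1)) ℝ) p.castSucc q.castSucc
            = (1 : Matrix (Fin k) (Fin k) ℝ) p q := by
          simp [Matrix.one_apply, Fin.castSucc_inj]
        rw [h1]
        ring
  have hMN : (Atilᵀ * Atil) * N = 1 := mul_eq_one_comm.mp hNM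
  exact ⟨⟨⟨Atilᵀ * Atil, N, hMN, hNM⟩, rfl⟩, Matrix.inv_eq_left_inv hNM⟩

end
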